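/- For k ≥ 1, complex tuples μ = (μ_1,…,μ_k), complex r, and any nonnegative integer tuple t with |t| ≥ 1, the multiparameter Fuss–Catalan numbers satisfy 𝒜_t(μ, r+1) = 𝒜_t(μ, r) + ∑_{j=1}^{k} 𝒜_{t - e_j}(μ, r + μ_j), where e_j is the j-th standard basis tuple and terms with a negative component are zero. -/

import Mathlib

/-- Multiparameter Fuss–Catalan number `𝒜_t(μ, r)`:
`𝒜_0 = 1` and for `|t| > 0`, `𝒜_t(μ, r) = (r/(t_1!⋯t_k!)) ∏_{j=1}^{|t|-1}(t·μ + r - j)`. -/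
noncomputable def mfc {k : ℕ} (μ : Fin k → ℂ) (r : ℂ) (t : Fin k → ℕ) : ℂ :=
  if (∑ i, t i) = 0 then 1
  else r / (∏ i, ((t i).factorial : ℂ)) *
    ∏ j ∈ Finset.Icc 1 ((∑ i, t i) - 1), ((∑ i, (t i : ℂ) * μ i) + r - (j : ℂ))

private lemma prodIccOne (f : ℕ → ℂ) (N : ℕ) :
    ∏ j ∈ Finset.Icc 1 N, f j = ∏ i ∈ Finset.range N, f (i + 1) := by
  induction N with
  | zero => simp
  | succ n ih =>
      rw [Finset.prod_Icc_succ_top (Nat.le_add_left 1 n), ih, Finset.prod_range_succ]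

private lemma subSingleSum {k : ℕ} (t : Fin k → ℕ) (j : Fin k) (h : 1 ≤ t j) :
    ∑ i, ((t - Pi.single j 1 : Fin k → ℕ)) i = (∑ i, t i) - 1 := by
  have h1 : ∑ i, ((t - Pi.single j 1 : Fin k → ℕ)) i
      = (t j - 1) + ∑ i ∈ Finset.univ.erase j, t i := by
    rw [← Finset.add_sum_erase _ _ (Finset.mem_univ j)]
    congr 1
    · simp [Pi.sub_apply]
    · exact Finset.sum_congr rfl fun i hi => by
        simp [Pi.sub_apply, Pi.single_eq_of_ne (Finset.ne_of_mem_erase hi)]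
  have h2 : ∑ i, t i = t j + ∑ i ∈ Finset.univ.erase j, t i :=
    (Finset.add_sum_erase _ _ (Finset.mem_univ j)).symm
  omega

private lemma subSingleDot {k : ℕ} (t : Fin k → ℕ) (μ : Fin k → ℂ) (j : Fin k)
    (h : 1 ≤ t j) :
    ∑ i, (((t - Pi.single j 1 : Fin k → ℕ)) i : ℂ) * μ i = (∑ i, (t i : ℂ) * μ i) - μ j := by
  have key : ∀ f : Fin k → ℂ, ∑ i, f i = f j + ∑ i ∈ Finset.univ.erase j, f i :=
    fun f => (Finset.add_sum_erase _ f (Finset.mem_univ j)).symm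
  rw [key, key fun i => (t i : ℂ) * μ i]
  have e1 : ((((t - Pi.single j 1 : Fin k → ℕ)) j : ℕ) : ℂ) = (t j : ℂ) - 1 := by
    have : ((t - Pi.single j 1 : Fin k → ℕ)) j = t j - 1 := by simp [Pi.sub_apply]
    rw [this, Nat.cast_sub h, Nat.cast_one]
  have e2 : ∑ i ∈ Finset.univ.erase j, (((t - Pi.single j 1 : Fin k → ℕ)) i : ℂ) * μ i
      = ∑ i ∈ Finset.univ.erase j, (t i : ℂ) * μ i :=
    Finset.sum_congr rfl fun i hi => by
      simp [Pi.sub_apply, Pi.single_eq_of_ne (Finset.ne_of_mem_erase hi)]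
  rw [e1, e2]; ring

private lemma subSingleFact {k : ℕ} (t : Fin k → ℕ) (j : Fin k) (h : 1 ≤ t j) :
    (t j : ℂ) * ∏ i, ((((t - Pi.single j 1 : Fin k → ℕ)) i).factorial : ℂ)
      = ∏ i, ((t i).factorial : ℂ) := by
  have key : ∀ f : Fin k → ℂ, ∏ i, f i = (∏ i ∈ Finset.univ.erase j, f i) * f j :=
    fun f => (Finset.prod_erase_mul _ f (Finset.mem_univ j)).symm
  rw [key, key fun i => ((t i).factorial : ℂ)]
  have e2 : ∏ i ∈ Finset.univ.erase j, ((((t - Pi.single j 1 : Fin k → ℕ)) i).factorial : ℂ)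
      = ∏ i ∈ Finset.univ.erase j, ((t i).factorial : ℂ) :=
    Finset.prod_congr rfl fun i hi => by
      simp [Pi.sub_apply, Pi.single_eq_of_ne (Finset.ne_of_mem_erase hi)]
  have e1 : (t j : ℂ) * ((((t - Pi.single j 1 : Fin k → ℕ)) j).factorial : ℂ) = ((t j).factorial : ℂ) := by
    have : ((t - Pi.single j 1 : Fin k → ℕ)) j = t j - 1 := by simp [Pi.sub_apply]
    rw [this, ← Nat.cast_mul, Nat.mul_factorial_pred (by omega)]
  rw [e2]; rw [mul_comm, mul_assoc, mul_comm ((((t - Pi.single j 1 : Fin k → ℕ)) j).factorial : ℂ), e1]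

/-- Multiparameter recurrence: for `|t| ≥ 1`,
`𝒜_t(μ, r+1) = 𝒜_t(μ, r) + ∑_j 𝒜_{t - e_j}(μ, r + μ_j)`,
where terms with a negative component (i.e. `t j = 0`) are zero. -/
theorem mfc_recurrence {k : ℕ} (hk : 1 ≤ k) (μ : Fin k → ℂ) (r : ℂ)
    (t : Fin k → ℕ) (ht : 1 ≤ ∑ i, t i) :
    mfc μ (r + 1) t =
      mfc μ r t +
        ∑ j : Fin k,
          (if 1 ≤ t j then mfc μ (r + μ j) (t - Pi.single j 1) else 0) := by
  classical
  set n := ∑ i, t i with hn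
  set m := ∑ i, (t i : ℂ) * μ i with hm
  set F := ∏ i, ((t i).factorial : ℂ) with hF
  have hF0 : F ≠ 0 := by
    rw [hF]
    exact Finset.prod_ne_zero_iff.mpr fun i _ =>
      Nat.cast_ne_zero.mpr (Nat.factorial_pos _).ne'
  have hn0 : n ≠ 0 := by omega
  by_cases h1 : n = 1
  · -- |t| = 1
    have hti : ∀ i, t i ≤ 1 := fun i => by
      have := Finset.single_le_sum (f := t) (fun i _ => Nat.zero_le _) (Finset.mem_univ i)
      omega
    have hF1 : F = 1 := by
      rw [hF]
      apply Finset.prod_eq_one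
      intro i _
      rcases Nat.le_one_iff_eq_zero_or_eq_one.mp (hti i) with h | h <;> simp [h]
    have hL : mfc μ (r + 1) t = r + 1 := by
      rw [mfc, if_neg (by rw [← hn]; exact hn0), ← hn, h1]
      simp [← hF, hF1]
    have hR : mfc μ r t = r := by
      rw [mfc, if_neg (by rw [← hn]; exact hn0), ← hn, h1]
      simp [← hF, hF1]
    have hterm : ∀ j : Fin k,
        (if 1 ≤ t j then mfc μ (r + μ j) (t - Pi.single j 1) else 0) = (t j : ℂ) := by
      intro j
      by_cases hj : 1 ≤ t j
      · rw [if_pos hj, mfc, if_pos (by rw [subSingleSum t j hj, ← hn, h1])]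
        have : t j = 1 := le_antisymm (hti j) hj
        simp [this]
      · rw [if_neg hj]
        have : t j = 0 := by omega
        simp [this]
    rw [hL, hR, Finset.sum_congr rfl fun j _ => hterm j]
    have : ∑ j : Fin k, (t j : ℂ) = ((∑ j, t j : ℕ) : ℂ) := by push_cast; rfl
    rw [this, ← hn, h1]
    push_cast; ring
  · -- |t| ≥ 2
    have h2 : 2 ≤ n := by omega
    set Q := ∏ i ∈ Finset.range (n - 2), (m + r - ((i + 1 : ℕ) : ℂ)) with hQ
    have hL : mfc μ (r + 1) t = (r + 1) / F * ((m + r) * Q) := by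
      rw [mfc, if_neg (by rw [← hn]; exact hn0), ← hn, ← hm, ← hF]
      congr 1
      rw [prodIccOne]
      have : n - 1 = (n - 2) + 1 := by omega
      rw [this, Finset.prod_range_succ', hQ]
      rw [mul_comm]
      congr 1
      · push_cast; ring
      · exact Finset.prod_congr rfl fun i _ => by push_cast; ring
    have hM : mfc μ r t = r / F * (Q * (m + r - ((n : ℂ) - 1))) := by
      rw [mfc, if_neg (by rw [← hn]; exact hn0), ← hn, ← hm, ← hF]
      congr 1
      rw [prodIccOne]
      have : n - 1 = (n - 2) + 1 := by omega
      rw [this, Finset.prod_range_succ, hQ]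
      congr 1
      have : (((n - 2 : ℕ) + 1 : ℕ) : ℂ) = (n : ℂ) - 1 := by
        have : (n - 2) + 1 = n - 1 := by omega
        rw [this, Nat.cast_sub (by omega)]; norm_num
      rw [this]
    have hterm : ∀ j : Fin k,
        (if 1 ≤ t j then mfc μ (r + μ j) (t - Pi.single j 1) else 0)
          = ((r + μ j) * (t j : ℂ)) / F * Q := by
      intro j
      by_cases hj : 1 ≤ t j
      · rw [if_pos hj, mfc,
          if_neg (by rw [subSingleSum t j hj, ← hn]; omega),
          subSingleSum t j hj, ← hn, subSingleDot t μ j hj, ← hm]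
        have hFj0 : (∏ i, ((((t - Pi.single j 1 : Fin k → ℕ)) i).factorial : ℂ)) ≠ 0 :=
          Finset.prod_ne_zero_iff.mpr fun i _ =>
            Nat.cast_ne_zero.mpr (Nat.factorial_pos _).ne'
        have htj0 : (t j : ℂ) ≠ 0 := Nat.cast_ne_zero.mpr (by omega)
        have hprod : ∏ i ∈ Finset.Icc 1 (n - 1 - 1), (m - μ j + (r + μ j) - (i : ℂ))
            = Q := by
          have : n - 1 - 1 = n - 2 := by omega
          rw [this, prodIccOne, hQ]
          exact Finset.prod_congr rfl fun i _ => by ring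
        rw [hprod]
        have hFrel := subSingleFact t j hj
        rw [← hF] at hFrel
        congr 1
        rw [div_eq_div_iff hFj0 hF0, ← hFrel]
        ring
      · rw [if_neg hj]
        have : t j = 0 := by omega
        simp [this]
    rw [hL, hM, Finset.sum_congr rfl fun j _ => hterm j]
    have hsum : ∑ j : Fin k, ((r + μ j) * (t j : ℂ)) / F * Q
        = (r * (n : ℂ) + m) / F * Q := by
      rw [← Finset.sum_mul, ← Finset.sum_div]
      congr 2
      have : ∑ j : Fin k, (r + μ j) * (t j : ℂ)
          = r * ∑ j : Fin k, (t j : ℂ) + ∑ j : Fin k, (t j : ℂ) * μ j := by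
        rw [Finset.mul_sum, ← Finset.sum_add_distrib]
        exact Finset.sum_congr rfl fun j _ => by ring
      rw [this, ← hm]
      congr 2
      rw [hn]; push_cast; rfl
    rw [hsum]
    field_simp
    ring
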